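/- Let (a_n)_{n≥1} be a strictly increasing sequence of positive integers with positive upper density, i.e. limsup_{n→∞} n/a_n > 0. Then for no real number α does the sequence ({a_n α})_{n≥1} of fractional parts have Poissonian pair correlations. -/

import Mathlib

open Filter

/-- Distance to the nearest integer. -/
noncomputable def nearestIntDist (x : ℝ) : ℝ := |x - round x|

open Classical in
/-- The pair correlation function
`R₂([-s,s],(x_n),N) = (1/N) · #{1 ≤ i ≠ j ≤ N : ‖x_i − x_j‖ ≤ s/N}`. -/
noncomputable def pairCorrFn (x : ℕ → ℝ) (s : ℝ) (N : ℕ) : ℝ :=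
  (1 / (N : ℝ)) * (((Finset.Icc 1 N ×ˢ Finset.Icc 1 N).filter
    (fun p => p.1 ≠ p.2 ∧ nearestIntDist (x p.1 - x p.2) ≤ s / N)).card : ℝ)

/-- A sequence has Poissonian pair correlations if `R₂ → 2s` for every `s > 0`. -/
def HasPoissonianPairCorrelations (x : ℕ → ℝ) : Prop :=
  ∀ s : ℝ, 0 < s → Tendsto (fun N : ℕ => pairCorrFn x s N) atTop (nhds (2 * s))

lemma nid_nonneg (x : ℝ) : 0 ≤ nearestIntDist x := abs_nonneg _

lemma nid_le_int (x : ℝ) (n : ℤ) : nearestIntDist x ≤ |x - n| := round_le x n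

lemma nid_add_int (x : ℝ) (n : ℤ) : nearestIntDist (x + n) = nearestIntDist x := by
  unfold nearestIntDist
  rw [round_add_intCast]
  push_cast
  ring_nf

lemma nid_neg (x : ℝ) : nearestIntDist (-x) = nearestIntDist x := by
  have h : ∀ y : ℝ, nearestIntDist (-y) ≤ nearestIntDist y := by
    intro y
    calc nearestIntDist (-y) ≤ |(-y) - (-(round y) : ℤ)| := nid_le_int _ _
    _ = |y - round y| := by push_cast; rw [← abs_neg]; ring_nf
    _ = nearestIntDist y := rfl
  refine le_antisymm (h x) ?_
  simpa using h (-x)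

lemma nid_add_le (x y : ℝ) : nearestIntDist (x + y) ≤ nearestIntDist x + nearestIntDist y := by
  calc nearestIntDist (x + y) ≤ |(x + y) - ((round x + round y : ℤ) : ℝ)| := nid_le_int _ _
  _ = |(x - round x) + (y - round y)| := by push_cast; ring_nf
  _ ≤ |x - round x| + |y - round y| := abs_add_le _ _
  _ = nearestIntDist x + nearestIntDist y := rfl

lemma nid_sub_le (x y : ℝ) : nearestIntDist (x - y) ≤ nearestIntDist x + nearestIntDist y := by
  have := nid_add_le x (-y)
  rw [nid_neg] at this
  simpa [sub_eq_add_neg] using this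

lemma nid_nsmul (n : ℕ) (x : ℝ) : nearestIntDist (n * x) ≤ n * nearestIntDist x := by
  induction n with
  | zero => simp [nearestIntDist]
  | succ k ih =>
      have : ((k : ℝ) + 1) * x = (k : ℝ) * x + x := by ring
      push_cast
      rw [this]
      calc nearestIntDist ((k : ℝ) * x + x) ≤ nearestIntDist ((k:ℝ)*x) + nearestIntDist x :=
        nid_add_le _ _
      _ ≤ k * nearestIntDist x + nearestIntDist x := by linarith
      _ = ((k:ℝ) + 1) * nearestIntDist x := by ring

lemma nid_int_mul (t : ℤ) (x : ℝ) : nearestIntDist (t * x) ≤ |t| * nearestIntDist x := by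
  rcases le_or_gt 0 t with h | h
  · lift t to ℕ using h
    push_cast
    simpa using nid_nsmul t x
  · have ht : (t : ℝ) * x = -(((-t).toNat : ℝ) * x) := by
      have : ((-t).toNat : ℝ) = -(t : ℝ) := by
        have : ((-t).toNat : ℤ) = -t := Int.toNat_of_nonneg (by omega)
        exact_mod_cast congrArg (fun z : ℤ => (z : ℝ)) this
      rw [this]; ring
    rw [ht, nid_neg]
    have h2 := nid_nsmul (-t).toNat x
    have h3 : (((-t).toNat : ℕ) : ℝ) = |(t:ℝ)| := by
      have : ((-t).toNat : ℤ) = -t := Int.toNat_of_nonneg (by omega)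
      have h4 : (((-t).toNat : ℕ) : ℝ) = -(t:ℝ) := by exact_mod_cast congrArg (fun z : ℤ => (z : ℝ)) this
      rw [h4, abs_of_neg (by exact_mod_cast h)]
    rw [h3] at h2
    calc nearestIntDist (((-t).toNat : ℝ) * x) ≤ |(t:ℝ)| * nearestIntDist x := by
          rw [h3]; exact h2
    _ = |t| * nearestIntDist x := by norm_cast
    
lemma nid_fract_sub (u v : ℝ) :
    nearestIntDist (Int.fract u - Int.fract v) = nearestIntDist (u - v) := by
  have h : Int.fract u - Int.fract v = (u - v) + ((⌊v⌋ - ⌊u⌋ : ℤ) : ℝ) := by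
    unfold Int.fract
    push_cast
    ring
  rw [h, nid_add_int]

lemma PPC_cs {γ : Type} [DecidableEq γ] (I : Finset ℕ) (g : ℕ → γ) :
    ((I.card : ℝ))^2 ≤ ((I.image g).card : ℝ) *
      ((((I ×ˢ I).filter fun p => g p.1 = g p.2 ∧ p.1 ≠ p.2).card : ℝ) + I.card) := by
  classical
  set C := I.image g with hC
  have key2 : I.card = ∑ c ∈ C, (I.filter fun i => g i = c).card :=
    Finset.card_eq_sum_card_fiberwise (fun x hx => Finset.mem_image_of_mem g hx)
  have key1 : ((I ×ˢ I).filter fun p => g p.1 = g p.2).card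
      = ∑ c ∈ C, ((I.filter fun i => g i = c).card)^2 := by
    rw [Finset.card_eq_sum_card_fiberwise
      (f := fun p : ℕ × ℕ => g p.1) (t := C)
      (fun p hp => by
        simp only [Finset.mem_coe, Finset.mem_filter, Finset.mem_product] at hp
        exact Finset.mem_image_of_mem g hp.1.1)]
    refine Finset.sum_congr rfl fun c hc => ?_
    have hset : (((I ×ˢ I).filter fun p => g p.1 = g p.2).filter (fun p => g p.1 = c))
        = (I.filter fun i => g i = c) ×ˢ (I.filter fun i => g i = c) := by
      ext p
      simp only [Finset.mem_filter, Finset.mem_product]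
      constructor
      · rintro ⟨⟨⟨h1, h2⟩, h3⟩, h4⟩
        exact ⟨⟨h1, h4⟩, h2, h3 ▸ h4⟩
      · rintro ⟨⟨h1, h3⟩, h2, h4⟩
        exact ⟨⟨⟨h1, h2⟩, h3.trans h4.symm⟩, h3⟩
    rw [hset, Finset.card_product, sq]
  have key4 : ((I ×ˢ I).filter fun p => g p.1 = g p.2).card
      ≤ ((I ×ˢ I).filter (fun p => g p.1 = g p.2 ∧ p.1 ≠ p.2)).card + I.card := by
    have hsplit := Finset.card_filter_add_card_filter_not
      (s := (I ×ˢ I).filter fun p => g p.1 = g p.2) (p := fun p => p.1 ≠ p.2)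
    rw [Finset.filter_filter, Finset.filter_filter] at hsplit
    have hdiag : (((I ×ˢ I)).filter (fun p => g p.1 = g p.2 ∧ ¬ p.1 ≠ p.2)).card ≤ I.card := by
      apply Finset.card_le_card_of_injOn (fun p => p.1)
      · intro p hp
        simp only [Finset.mem_coe, Finset.mem_filter, Finset.mem_product] at hp
        exact hp.1.1
      · intro p hp q hq hpq
        rw [Finset.mem_coe, Finset.mem_filter] at hp hq
        have hp2 : p.1 = p.2 := not_not.mp hp.2.2
        have hq2 : q.1 = q.2 := not_not.mp hq.2.2
        exact Prod.ext hpq (by rw [← hp2, ← hq2]; exact hpq)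
    omega
  have CS : (∑ c ∈ C, ((I.filter fun i => g i = c).card : ℝ))^2
      ≤ (C.card : ℝ) * ∑ c ∈ C, ((I.filter fun i => g i = c).card : ℝ)^2 := by
    exact_mod_cast sq_sum_le_card_mul_sum_sq (s := C)
      (f := fun c => ((I.filter fun i => g i = c).card : ℝ))
  have e1 : ((I.card : ℝ))^2 = (∑ c ∈ C, ((I.filter fun i => g i = c).card : ℝ))^2 := by
    rw [key2]; push_cast; ring
  have e2 : ∑ c ∈ C, ((I.filter fun i => g i = c).card : ℝ)^2
      = (((I ×ˢ I).filter fun p => g p.1 = g p.2).card : ℝ) := by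
    rw [key1]; push_cast; ring
  rw [e1]
  refine CS.trans ?_
  rw [e2]
  have : (((I ×ˢ I).filter fun p => g p.1 = g p.2).card : ℝ)
      ≤ (((I ×ˢ I).filter (fun p => g p.1 = g p.2 ∧ p.1 ≠ p.2)).card : ℝ) + I.card := by
    exact_mod_cast key4
  have hnn : (0:ℝ) ≤ (C.card : ℝ) := by positivity
  nlinarith [Finset.card_filter_le (I ×ˢ I) (fun p => g p.1 = g p.2)]

lemma PPC_freq_pigeon {M : ℕ} {p : ℕ → ℕ → Prop}
    (h : ∃ᶠ n in atTop, ∃ k, k < M ∧ p k n) : ∃ k, k < M ∧ ∃ᶠ n in atTop, p k n := by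
  by_contra hcon
  push_neg at hcon
  have hev : ∀ᶠ n in atTop, ∀ k ∈ Finset.range M, ¬ p k n := by
    rw [eventually_all_finset]
    intro k hk
    have := hcon k (Finset.mem_range.mp hk)
    exact this
  obtain ⟨n, ⟨k, hk, hpk⟩, hall⟩ := (h.and_eventually hev).exists
  exact hall k (Finset.mem_range.mpr hk) hpk

open Classical in
noncomputable def PCset (a : ℕ → ℕ) (α : ℝ) (s : ℝ) (N : ℕ) : Finset (ℕ × ℕ) :=
  (Finset.Icc 1 N ×ˢ Finset.Icc 1 N).filter
    (fun p => p.1 ≠ p.2 ∧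
      nearestIntDist (Int.fract ((a p.1 : ℝ) * α) - Int.fract ((a p.2 : ℝ) * α)) ≤ s / N)

lemma pairCorrFn_eq (a : ℕ → ℕ) (α : ℝ) (s : ℝ) (N : ℕ) :
    pairCorrFn (fun n => Int.fract ((a n : ℝ) * α)) s N
      = (1 / (N : ℝ)) * ((PCset a α s N).card : ℝ) := rfl

open Classical in
noncomputable def Tset (a : ℕ → ℕ) (d : ℤ) (N : ℕ) : Finset (ℕ × ℕ) :=
  (Finset.Icc 1 N ×ˢ Finset.Icc 1 N).filter
    (fun p => p.1 ≠ p.2 ∧ (a p.1 : ℤ) - (a p.2 : ℤ) = d)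

noncomputable def Dset (a : ℕ → ℕ) (α : ℝ) (s : ℝ) (N : ℕ) : Finset ℤ :=
  (PCset a α s N).image (fun p => (a p.1 : ℤ) - (a p.2 : ℤ))

lemma mem_PCset {a : ℕ → ℕ} {α s : ℝ} {N : ℕ} {p : ℕ × ℕ} :
    p ∈ PCset a α s N ↔ (1 ≤ p.1 ∧ p.1 ≤ N) ∧ (1 ≤ p.2 ∧ p.2 ≤ N) ∧ p.1 ≠ p.2 ∧
      nearestIntDist ((((a p.1 : ℤ) - (a p.2 : ℤ) : ℤ) : ℝ) * α) ≤ s / N := by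
  classical
  unfold PCset
  rw [Finset.mem_filter, Finset.mem_product, Finset.mem_Icc, Finset.mem_Icc]
  have : nearestIntDist (Int.fract ((a p.1 : ℝ) * α) - Int.fract ((a p.2 : ℝ) * α))
      = nearestIntDist ((((a p.1 : ℤ) - (a p.2 : ℤ) : ℤ) : ℝ) * α) := by
    rw [nid_fract_sub]
    congr 1
    push_cast
    ring
  rw [this]
  tauto

lemma mem_Tset {a : ℕ → ℕ} {d : ℤ} {N : ℕ} {p : ℕ × ℕ} :
    p ∈ Tset a d N ↔ (1 ≤ p.1 ∧ p.1 ≤ N) ∧ (1 ≤ p.2 ∧ p.2 ≤ N) ∧ p.1 ≠ p.2 ∧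
      (a p.1 : ℤ) - (a p.2 : ℤ) = d := by
  classical
  unfold Tset
  rw [Finset.mem_filter, Finset.mem_product, Finset.mem_Icc, Finset.mem_Icc]
  tauto

lemma Tset_card_neg (a : ℕ → ℕ) (d : ℤ) (N : ℕ) :
    (Tset a (-d) N).card = (Tset a d N).card := by
  classical
  apply Finset.card_bij (fun p _ => Prod.swap p)
  · intro p hp
    rw [mem_Tset] at hp ⊢
    refine ⟨hp.2.1, hp.1, Ne.symm hp.2.2.1, ?_⟩
    have := hp.2.2.2
    simp only [Prod.fst_swap, Prod.snd_swap]
    omega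
  · intro p _ q _ h
    exact Prod.swap_injective h
  · intro p hp
    exact ⟨Prod.swap p, by
      rw [mem_Tset] at hp ⊢
      refine ⟨hp.2.1, hp.1, Ne.symm hp.2.2.1, by
        have := hp.2.2.2
        simp only [Prod.fst_swap, Prod.snd_swap]
        omega⟩, by simp⟩

lemma Tset_subset_PCset {a : ℕ → ℕ} {α : ℝ} {d : ℤ} {N : ℕ} {s : ℝ}
    (hnid : nearestIntDist ((d : ℝ) * α) ≤ s / N) :
    Tset a d N ⊆ PCset a α s N := by
  intro p hp
  rw [mem_Tset] at hp
  rw [mem_PCset]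
  refine ⟨hp.1, hp.2.1, hp.2.2.1, ?_⟩
  rw [hp.2.2.2]
  exact hnid

lemma PCset_mono {a : ℕ → ℕ} {α : ℝ} {N : ℕ} {s s' : ℝ} (h : s' ≤ s) :
    PCset a α s' N ⊆ PCset a α s N := by
  intro p hp
  rw [mem_PCset] at hp ⊢
  refine ⟨hp.1, hp.2.1, hp.2.2.1, hp.2.2.2.trans ?_⟩
  rcases eq_or_lt_of_le (Nat.cast_nonneg N : (0:ℝ) ≤ N) with h0 | h0
  · rw [← h0]; simp
  · exact (div_le_div_iff_of_pos_right h0).mpr h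

lemma nid_neg_int (d : ℤ) (α : ℝ) :
    nearestIntDist (((-d : ℤ) : ℝ) * α) = nearestIntDist ((d : ℝ) * α) := by
  push_cast
  rw [show -(d:ℝ) * α = -((d:ℝ)*α) by ring, nid_neg]

lemma Tset_disj {a : ℕ → ℕ} {d : ℤ} {N : ℕ} (hd : d ≠ 0) :
    Disjoint (Tset a d N) (Tset a (-d) N) := by
  rw [Finset.disjoint_left]
  intro p hp hp'
  rw [mem_Tset] at hp hp'
  have := hp.2.2.2
  have := hp'.2.2.2
  omega

lemma PCset_lower_two {a : ℕ → ℕ} {α : ℝ} {d : ℤ} {N : ℕ} {s : ℝ} (hd : d ≠ 0)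
    (hnid : nearestIntDist ((d : ℝ) * α) ≤ s / N) :
    2 * (Tset a d N).card ≤ (PCset a α s N).card := by
  classical
  have hsub : Tset a d N ∪ Tset a (-d) N ⊆ PCset a α s N := by
    apply Finset.union_subset
    · exact Tset_subset_PCset hnid
    · exact Tset_subset_PCset (by rw [nid_neg_int]; exact hnid)
  calc 2 * (Tset a d N).card = (Tset a d N).card + (Tset a (-d) N).card := by
        rw [Tset_card_neg]; ring
  _ = (Tset a d N ∪ Tset a (-d) N).card := (Finset.card_union_of_disjoint (Tset_disj hd)).symm
  _ ≤ (PCset a α s N).card := Finset.card_le_card hsub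

lemma PCset_lower_jump {a : ℕ → ℕ} {α : ℝ} {d : ℤ} {N : ℕ} {s s' : ℝ} (hd : d ≠ 0)
    (hnid : nearestIntDist ((d : ℝ) * α) ≤ s / N)
    (hs' : s' / N < nearestIntDist ((d : ℝ) * α)) (hss' : s' ≤ s) :
    (PCset a α s' N).card + 2 * (Tset a d N).card ≤ (PCset a α s N).card := by
  classical
  have hUsub : Tset a d N ∪ Tset a (-d) N ⊆ PCset a α s N := by
    apply Finset.union_subset
    · exact Tset_subset_PCset hnid
    · exact Tset_subset_PCset (by rw [nid_neg_int]; exact hnid)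
  have hdisj2 : Disjoint (PCset a α s' N) (Tset a d N ∪ Tset a (-d) N) := by
    rw [Finset.disjoint_left]
    intro p hp hp'
    rw [mem_PCset] at hp
    have hple := hp.2.2.2
    rcases Finset.mem_union.mp hp' with h | h
    · rw [mem_Tset] at h
      rw [h.2.2.2] at hple
      exact absurd hple (not_le.mpr hs')
    · rw [mem_Tset] at h
      rw [h.2.2.2, nid_neg_int] at hple
      exact absurd hple (not_le.mpr hs')
  have hsub : PCset a α s' N ∪ (Tset a d N ∪ Tset a (-d) N) ⊆ PCset a α s N :=
    Finset.union_subset (PCset_mono hss') hUsub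
  calc (PCset a α s' N).card + 2 * (Tset a d N).card
      = (PCset a α s' N).card + ((Tset a d N).card + (Tset a (-d) N).card) := by
        rw [Tset_card_neg]; ring
  _ = (PCset a α s' N ∪ (Tset a d N ∪ Tset a (-d) N)).card := by
        rw [Finset.card_union_of_disjoint hdisj2, Finset.card_union_of_disjoint (Tset_disj hd)]
  _ ≤ (PCset a α s N).card := Finset.card_le_card hsub

section helpers
variable {a : ℕ → ℕ}

lemma a_le_of_le (hmono : ∀ m n, 1 ≤ m → m < n → a m < a n) {i N : ℕ} (h1 : 1 ≤ i) (h2 : i ≤ N) : a i ≤ a N := by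
  rcases eq_or_lt_of_le h2 with h | h
  · rw [h]
  · exact le_of_lt (hmono i N h1 h)

lemma a_ne_of_ne (hmono : ∀ m n, 1 ≤ m → m < n → a m < a n) {i j : ℕ} (h1 : 1 ≤ i) (h1' : 1 ≤ j) (hne : i ≠ j) : (a i : ℤ) ≠ (a j : ℤ) := by
  rcases lt_or_gt_of_ne hne with h | h
  · have := hmono i j h1 h; omega
  · have := hmono j i h1' h; omega

lemma Dset_mem_spec (hmono : ∀ m n, 1 ≤ m → m < n → a m < a n) (hpos : ∀ n, 1 ≤ n → 0 < a n) {α s : ℝ} {N K : ℕ} (hN : 1 ≤ N) (haN : a N ≤ K * N)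
    {d : ℤ} (hd : d ∈ Dset a α s N) :
    d ≠ 0 ∧ nearestIntDist ((d : ℝ) * α) ≤ s / N ∧ 1 ≤ |d| ∧ |d| ≤ (K : ℤ) * N - 1 := by
  obtain ⟨p, hp, rfl⟩ := Finset.mem_image.mp hd
  rw [mem_PCset] at hp
  obtain ⟨⟨h11, h12⟩, ⟨h21, h22⟩, hne, hnid⟩ := hp
  have hane := a_ne_of_ne hmono h11 h21 hne
  have ha1 := a_le_of_le hmono h11 h12
  have ha2 := a_le_of_le hmono h21 h22
  have hb1 := hpos p.1 h11
  have hb2 := hpos p.2 h21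
  have habs := abs_cases ((a p.1:ℤ) - (a p.2:ℤ))
  refine ⟨by omega, hnid, ?_, ?_⟩ <;>
    rcases habs with ⟨he, h0⟩ | ⟨he, h0⟩ <;> rw [he] <;> omega

lemma Dset_neg_mem {α s : ℝ} {N : ℕ} {d : ℤ} (hd : d ∈ Dset a α s N) :
    -d ∈ Dset a α s N := by
  obtain ⟨p, hp, rfl⟩ := Finset.mem_image.mp hd
  rw [mem_PCset] at hp
  apply Finset.mem_image.mpr
  refine ⟨Prod.swap p, ?_, by simp only [Prod.fst_swap, Prod.snd_swap]; ring⟩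
  rw [mem_PCset]
  refine ⟨hp.2.1, hp.1, Ne.symm hp.2.2.1, ?_⟩
  have := hp.2.2.2
  simp only [Prod.fst_swap, Prod.snd_swap]
  rw [show ((a p.2 : ℤ) - (a p.1 : ℤ)) = -((a p.1 : ℤ) - (a p.2 : ℤ)) by ring, nid_neg_int]
  exact this

end helpers

lemma exists_q {a : ℕ → ℕ} {α : ℝ} {K N : ℕ}
    (hmono : ∀ m n, 1 ≤ m → m < n → a m < a n) (hpos : ∀ n, 1 ≤ n → 0 < a n)
    (hK : 1 ≤ K) (hN : 1 ≤ N) (haN : a N ≤ K * N)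
    (hD : 10 * K + 2 ≤ (Dset a α (1 / (32 * (K:ℝ))) N).card) :
    ∃ q : ℤ, 1 ≤ q ∧ (q : ℝ) ≤ (N : ℝ) / 5 ∧
      nearestIntDist ((q : ℝ) * α) ≤ 1 / (16 * (K:ℝ) * N) := by
  classical
  set D := Dset a α (1 / (32 * (K:ℝ))) N with hDdef
  set posD := D.filter (fun d => 0 < d) with hposD
  have hDsub : D ⊆ posD ∪ posD.image (fun d => -d) := by
    intro d hd
    have hspec := Dset_mem_spec hmono hpos hN haN hd
    rcases lt_trichotomy 0 d with h | h | h
    · exact Finset.mem_union_left _ (Finset.mem_filter.mpr ⟨hd, h⟩)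
    · exact absurd h.symm hspec.1
    · refine Finset.mem_union_right _ (Finset.mem_image.mpr ⟨-d, ?_, by ring⟩)
      exact Finset.mem_filter.mpr ⟨Dset_neg_mem hd, by omega⟩
  have hposcard : 5 * K + 1 ≤ posD.card := by
    have h1 := Finset.card_le_card hDsub
    have h2 := Finset.card_union_le posD (posD.image (fun d : ℤ => -d))
    have h3 := Finset.card_image_le (s := posD) (f := fun d : ℤ => -d)
    omega
  set m : ℤ := ((N / 5 + 1 : ℕ) : ℤ) with hm
  have hm0 : 0 < m := by positivity
  have hmapsto : ∀ d ∈ posD, (d - 1) / m ∈ Finset.Ico (0:ℤ) (5 * K) := by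
    intro d hd
    have hdD : d ∈ D := (Finset.mem_filter.mp hd).1
    have hdpos : 0 < d := (Finset.mem_filter.mp hd).2
    have hspec := Dset_mem_spec hmono hpos hN haN hdD
    have hdub : d ≤ (K:ℤ) * N - 1 := by
      have := hspec.2.2.2; have := abs_cases d; omega
    rw [Finset.mem_Ico]
    constructor
    · exact Int.ediv_nonneg (by omega) (by omega)
    · rw [Int.ediv_lt_iff_lt_mul hm0]
      have h5m : (N : ℤ) + 1 ≤ 5 * m := by
        have := Nat.div_add_mod N 5
        omega
      have hKm : (K:ℤ) * ((N:ℤ) + 1) ≤ (K:ℤ) * (5 * m) :=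
        mul_le_mul_of_nonneg_left h5m (by positivity)
      nlinarith
  have hcardlt : (Finset.Ico (0:ℤ) (5 * K)).card < posD.card := by
    have : (Finset.Ico (0:ℤ) (5 * (K:ℤ))).card = 5 * K := by
      rw [Int.card_Ico]
      omega
    omega
  obtain ⟨x, hx, y, hy, hxy, hcl⟩ :=
    Finset.exists_ne_map_eq_of_card_lt_of_maps_to hcardlt hmapsto
  -- generic claim for ordered pair
  have key : ∀ x y : ℤ, x ∈ posD → y ∈ posD → x < y → (x-1)/m = (y-1)/m →
      ∃ q : ℤ, 1 ≤ q ∧ (q : ℝ) ≤ (N : ℝ) / 5 ∧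
        nearestIntDist ((q : ℝ) * α) ≤ 1 / (16 * (K:ℝ) * N) := by
    intro x y hx hy hlt hcl
    have e1 := Int.mul_ediv_add_emod (x - 1) m
    have e2 := Int.mul_ediv_add_emod (y - 1) m
    have r1a := Int.emod_nonneg (x - 1) (show m ≠ 0 by omega)
    have r1b := Int.emod_lt_of_pos (x - 1) hm0
    have r2a := Int.emod_nonneg (y - 1) (show m ≠ 0 by omega)
    have r2b := Int.emod_lt_of_pos (y - 1) hm0
    rw [hcl] at e1
    have hqm : y - x < m := by linarith
    have hq1 : 1 ≤ y - x := by omega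
    refine ⟨y - x, hq1, ?_, ?_⟩
    · have h1 : y - x ≤ m - 1 := by omega
      have h2 : ((m : ℤ) : ℝ) = ((N / 5 : ℕ) : ℝ) + 1 := by
        rw [hm]; norm_cast
      have h3 : ((N / 5 : ℕ) : ℝ) ≤ (N : ℝ) / 5 := Nat.cast_div_le
      have h4 : ((y - x : ℤ) : ℝ) ≤ ((m : ℤ) : ℝ) - 1 := by exact_mod_cast h1
      linarith
    · have hxD : x ∈ D := (Finset.mem_filter.mp hx).1
      have hyD : y ∈ D := (Finset.mem_filter.mp hy).1
      have hx2 := (Dset_mem_spec hmono hpos hN haN hxD).2.1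
      have hy2 := (Dset_mem_spec hmono hpos hN haN hyD).2.1
      have heq : ((y - x : ℤ) : ℝ) * α = ((y:ℤ):ℝ) * α - ((x:ℤ):ℝ) * α := by
        push_cast; ring
      rw [heq]
      have hb := nid_sub_le (((y:ℤ):ℝ) * α) (((x:ℤ):ℝ) * α)
      have hK0 : ((K:ℝ)) ≠ 0 := by positivity
      have hN0 : ((N:ℝ)) ≠ 0 := by positivity
      have harith : 1 / (32 * (K:ℝ)) / N + 1 / (32 * (K:ℝ)) / N = 1 / (16 * (K:ℝ) * N) := by
        field_simp
        ring
      calc nearestIntDist (((y:ℤ):ℝ) * α - ((x:ℤ):ℝ) * α)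
          ≤ nearestIntDist (((y:ℤ):ℝ) * α) + nearestIntDist (((x:ℤ):ℝ) * α) := hb
      _ ≤ 1 / (32 * (K:ℝ)) / N + 1 / (32 * (K:ℝ)) / N := add_le_add hy2 hx2
      _ = 1 / (16 * (K:ℝ) * N) := harith
  rcases lt_or_gt_of_ne hxy with h | h
  · exact key x y hx hy h hcl
  · exact key y x hy hx h hcl.symm

lemma clump {a : ℕ → ℕ} {α : ℝ} {K N : ℕ}
    (hmono : ∀ m n, 1 ≤ m → m < n → a m < a n) (hpos : ∀ n, 1 ≤ n → 0 < a n)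
    (hK : 1 ≤ K) (hN : 20 ≤ N) (haN : a N ≤ K * N)
    {q : ℤ} (hq1 : 1 ≤ q) (hq2 : (q : ℝ) ≤ (N : ℝ) / 5)
    (hqn : nearestIntDist ((q : ℝ) * α) ≤ 1 / (16 * (K:ℝ) * N)) :
    (3 / 2 : ℝ) * N ≤ ((PCset a α (5/16) N).card : ℝ) := by
  classical
  set M' : ℤ := 5 * K * q with hM'
  have hM'0 : 0 < M' := by positivity
  set g : ℕ → ℤ × ℤ := fun i => ((a i : ℤ) % q, (a i : ℤ) / M') with hg
  set I := Finset.Icc 1 N with hI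
  have hIcard : I.card = N := by rw [hI, Nat.card_Icc]; omega
  have hKN0 : (0:ℝ) < N := by positivity
  -- the same-class distinct pairs are in PCset at scale 5/16
  have hsub : (I ×ˢ I).filter (fun p => g p.1 = g p.2 ∧ p.1 ≠ p.2) ⊆ PCset a α (5/16) N := by
    intro p hp
    rw [Finset.mem_filter, Finset.mem_product] at hp
    obtain ⟨⟨hp1, hp2⟩, hgeq, hne⟩ := hp
    rw [hI, Finset.mem_Icc] at hp1 hp2
    set di : ℤ := (a p.1 : ℤ) - (a p.2 : ℤ) with hdi
    have hdine : di ≠ 0 := by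
      have := a_ne_of_ne hmono hp1.1 hp2.1 hne; omega
    have hfst : (a p.1 : ℤ) % q = (a p.2 : ℤ) % q := congrArg Prod.fst hgeq
    have hsnd : (a p.1 : ℤ) / M' = (a p.2 : ℤ) / M' := congrArg Prod.snd hgeq
    have hdvd : q ∣ di := by
      rw [hdi]
      exact Int.dvd_of_emod_eq_zero (Int.emod_eq_emod_iff_emod_sub_eq_zero.mp hfst)
    have habs : |di| < M' := by
      have e1 := Int.mul_ediv_add_emod (a p.1 : ℤ) M'
      have e2 := Int.mul_ediv_add_emod (a p.2 : ℤ) M'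
      rw [hsnd] at e1
      have r1a := Int.emod_nonneg (a p.1 : ℤ) (show M' ≠ 0 by omega)
      have r1b := Int.emod_lt_of_pos (a p.1 : ℤ) hM'0
      have r2a := Int.emod_nonneg (a p.2 : ℤ) (show M' ≠ 0 by omega)
      have r2b := Int.emod_lt_of_pos (a p.2 : ℤ) hM'0
      have hcase := abs_cases di
      rcases hcase with ⟨he, _⟩ | ⟨he, _⟩ <;> rw [he, hdi] <;> linarith
    set t : ℤ := di / q with ht
    have hdt : di = t * q := (Int.ediv_mul_cancel hdvd).symm
    have htabs : |t| ≤ 5 * K - 1 := by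
      have habs2 : |t * q| < M' := hdt ▸ habs
      rw [abs_mul, abs_of_pos (show (0:ℤ) < q by omega), hM'] at habs2
      have h2 : |t| < 5 * K := lt_of_mul_lt_mul_right habs2 (by omega)
      omega
    rw [mem_PCset]
    refine ⟨⟨hp1.1, hp1.2⟩, ⟨hp2.1, hp2.2⟩, hne, ?_⟩
    have heq : ((di : ℤ) : ℝ) * α = (t : ℝ) * ((q : ℝ) * α) := by
      rw [hdt]; push_cast; ring
    rw [heq]
    have hb := nid_int_mul t ((q : ℝ) * α)
    rw [Int.cast_abs] at hb
    have hK1 : (1:ℝ) ≤ K := by exact_mod_cast hK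
    have habs' : |(t:ℝ)| ≤ 5 * (K:ℝ) - 1 := by
      have : ((|t| : ℤ) : ℝ) ≤ ((5 * (K:ℤ) - 1 : ℤ) : ℝ) := by exact_mod_cast htabs
      rw [Int.cast_abs] at this
      push_cast at this ⊢
      linarith
    have hnn := nid_nonneg ((q : ℝ) * α)
    calc nearestIntDist ((t : ℝ) * ((q : ℝ) * α)) ≤ |(t:ℝ)| * nearestIntDist ((q:ℝ) * α) := hb
    _ ≤ (5 * (K:ℝ) - 1) * (1 / (16 * (K:ℝ) * N)) := by
        apply mul_le_mul habs' hqn hnn (by linarith)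
    _ ≤ (5:ℝ)/16 / N := by
        have h : (5*(K:ℝ)-1) * (1/(16*(K:ℝ)*N)) = (5*(K:ℝ)-1)/(16*(K:ℝ)*N) := by ring
        have h2 : (5:ℝ)/16/N = 5/(16*(N:ℝ)) := by ring
        rw [h, h2, div_le_div_iff₀ (by positivity) (by positivity)]
        nlinarith
  -- class count bound
  set e : ℤ := ((K:ℤ) * N) / M' with he
  have himg : I.image g ⊆ (Finset.Ico (0:ℤ) q) ×ˢ (Finset.Ico (0:ℤ) (e + 1)) := by
    intro z hz
    obtain ⟨i, hi, rfl⟩ := Finset.mem_image.mp hz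
    rw [hI, Finset.mem_Icc] at hi
    rw [Finset.mem_product, Finset.mem_Ico, Finset.mem_Ico]
    simp only [hg]
    have hai : (a i : ℤ) ≤ (K:ℤ) * N := by
      have h1 := a_le_of_le hmono hi.1 hi.2
      have h2 : (a i : ℤ) ≤ (a N : ℤ) := by exact_mod_cast h1
      have h3 : (a N : ℤ) ≤ (K:ℤ) * N := by exact_mod_cast haN
      omega
    refine ⟨⟨Int.emod_nonneg _ (by omega), Int.emod_lt_of_pos _ (by omega)⟩,
      Int.ediv_nonneg (by positivity) (by omega), ?_⟩
    have hlt : (a i : ℤ) / M' ≤ e := by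
      rw [he]
      exact Int.ediv_le_ediv hM'0 hai
    omega
  have he0 : 0 ≤ e := Int.ediv_nonneg (by positivity) (by omega)
  have hcardimg : ((I.image g).card : ℝ) ≤ 2 * (N:ℝ) / 5 := by
    have h1 : (I.image g).card ≤ ((q - 0).toNat) * ((e + 1 - 0).toNat) := by
      have h := Finset.card_le_card himg
      rwa [Finset.card_product, Int.card_Ico, Int.card_Ico] at h
    have hc1 : (((q - 0).toNat : ℕ) : ℝ) = (q : ℝ) := by
      rw [sub_zero]
      exact_mod_cast congrArg (fun z : ℤ => (z:ℝ)) (Int.toNat_of_nonneg (by omega))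
    have hc2 : (((e + 1 - 0).toNat : ℕ) : ℝ) = (e : ℝ) + 1 := by
      rw [sub_zero]
      have : ((e+1).toNat : ℤ) = e + 1 := Int.toNat_of_nonneg (by omega)
      exact_mod_cast congrArg (fun z : ℤ => (z:ℝ)) this
    have h2 : ((I.image g).card : ℝ) ≤ (q:ℝ) * ((e:ℝ) + 1) := by
      calc ((I.image g).card : ℝ) ≤ (((q - 0).toNat * ((e + 1 - 0).toNat) : ℕ) : ℝ) := by
            exact_mod_cast h1
      _ = (q:ℝ) * ((e:ℝ) + 1) := by rw [Nat.cast_mul, hc1, hc2]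
    -- q * e ≤ N / 5
    have hint : M' * e + ((K:ℤ) * N) % M' = (K:ℤ) * N := Int.mul_ediv_add_emod _ _
    have hr : 0 ≤ ((K:ℤ) * N) % M' := Int.emod_nonneg _ (by omega)
    have hZ : 5 * (K:ℤ) * (q * e) ≤ (K:ℤ) * N := by
      have : M' * e ≤ (K:ℤ) * N := by omega
      calc 5 * (K:ℤ) * (q * e) = M' * e := by rw [hM']; ring
      _ ≤ (K:ℤ) * N := this
    have hR : 5 * (K:ℝ) * ((q:ℝ) * e) ≤ (K:ℝ) * N := by exact_mod_cast hZ
    have hK5 : (0:ℝ) < 5 * (K:ℝ) := by positivity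
    have hqe : (q:ℝ) * (e:ℝ) ≤ (N:ℝ) / 5 := by
      rw [← mul_le_mul_iff_right₀ hK5]
      calc 5 * (K:ℝ) * ((q:ℝ) * e) ≤ (K:ℝ) * N := hR
      _ = 5 * (K:ℝ) * ((N:ℝ)/5) := by ring
    calc ((I.image g).card : ℝ) ≤ (q:ℝ) * ((e:ℝ) + 1) := h2
    _ = (q:ℝ) * (e:ℝ) + (q:ℝ) := by ring
    _ ≤ (N:ℝ)/5 + (N:ℝ)/5 := add_le_add hqe hq2
    _ = 2 * (N:ℝ) / 5 := by ring
  have hcs := PPC_cs I g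
  rw [hIcard] at hcs
  have hPle : ((((I ×ˢ I).filter fun p => g p.1 = g p.2 ∧ p.1 ≠ p.2).card : ℝ))
      ≤ ((PCset a α (5/16) N).card : ℝ) := by
    exact_mod_cast Finset.card_le_card hsub
  have hpos1 : (0:ℝ) ≤ (((I ×ˢ I).filter fun p => g p.1 = g p.2 ∧ p.1 ≠ p.2).card : ℝ) + N := by
    positivity
  have hN20 : (20:ℝ) ≤ N := by exact_mod_cast hN
  nlinarith [hcs, hcardimg, hPle, hpos1]

lemma branch2_select {a : ℕ → ℕ} {α : ℝ} {K N : ℕ}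
    (hmono : ∀ m n, 1 ≤ m → m < n → a m < a n) (hpos : ∀ n, 1 ≤ n → 0 < a n)
    (hK : 1 ≤ K) (hN : 1 ≤ N) (haN : a N ≤ K * N)
    (hDle : (Dset a α (1 / (32 * (K:ℝ))) N).card ≤ 10 * K + 1)
    (hcard : (1 / (32 * (K:ℝ))) * N < ((PCset a α (1 / (32 * (K:ℝ))) N).card : ℝ)) :
    ∃ d : ℤ, d ≠ 0 ∧ (1 / (352 * (K:ℝ)^2)) * N ≤ ((Tset a d N).card : ℝ) ∧
      nearestIntDist ((d : ℝ) * α) ≤ 1 / (32 * (K:ℝ)) / N := by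
  classical
  set sh : ℝ := 1 / (32 * (K:ℝ)) with hsh
  set F := PCset a α sh N with hF
  set D := Dset a α sh N with hD
  set c : ℝ := 1 / (352 * (K:ℝ)^2) with hc
  have hsum : F.card = ∑ d ∈ D, (F.filter (fun p => (a p.1 : ℤ) - (a p.2 : ℤ) = d)).card := by
    apply Finset.card_eq_sum_card_fiberwise
    intro p hp
    exact Finset.mem_image_of_mem _ hp
  have hex : ∃ d ∈ D, c * N ≤ ((F.filter (fun p => (a p.1 : ℤ) - (a p.2 : ℤ) = d)).card : ℝ) := by
    by_contra hcon
    push_neg at hcon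
    have hcN : 0 ≤ c * N := by positivity
    have hle : (F.card : ℝ) ≤ (D.card : ℝ) * (c * N) := by
      rw [hsum]
      push_cast
      calc ∑ d ∈ D, ((F.filter (fun p => (a p.1 : ℤ) - (a p.2 : ℤ) = d)).card : ℝ)
          ≤ ∑ _d ∈ D, c * N := Finset.sum_le_sum (fun d hd => (hcon d hd).le)
      _ = (D.card : ℝ) * (c * N) := by rw [Finset.sum_const, nsmul_eq_mul]
    have hDle' : (D.card : ℝ) ≤ 11 * K := by
      have h1 : (D.card : ℝ) ≤ 10 * K + 1 := by exact_mod_cast hDle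
      have hK1 : (1:ℝ) ≤ K := by exact_mod_cast hK
      linarith
    have h11 : 11 * (K:ℝ) * (c * N) = sh * N := by
      rw [hc, hsh]
      have hK0 : (K:ℝ) ≠ 0 := by positivity
      field_simp
      ring
    have : (F.card : ℝ) ≤ sh * N := by
      calc (F.card : ℝ) ≤ (D.card : ℝ) * (c * N) := hle
      _ ≤ 11 * (K:ℝ) * (c * N) := mul_le_mul_of_nonneg_right hDle' hcN
      _ = sh * N := h11
    linarith
  obtain ⟨d, hdD, hdfib⟩ := hex
  have hspec := Dset_mem_spec hmono hpos hN haN hdD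
  refine ⟨d, hspec.1, ?_, hspec.2.1⟩
  refine hdfib.trans ?_
  have hsub : F.filter (fun p => (a p.1 : ℤ) - (a p.2 : ℤ) = d) ⊆ Tset a d N := by
    intro p hp
    rw [Finset.mem_filter] at hp
    have hm := mem_PCset.mp hp.1
    rw [mem_Tset]
    exact ⟨hm.1, hm.2.1, hm.2.2.1, hp.2⟩
  exact_mod_cast Finset.card_le_card hsub

lemma get_K {a : ℕ → ℕ} (hpos : ∀ n, 1 ≤ n → 0 < a n)
    (hdens : 0 < Filter.limsup (fun n : ℕ => (n : ℝ) / (a n : ℝ)) Filter.atTop) :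
    ∃ K : ℕ, 1 ≤ K ∧ ∃ᶠ N in atTop, (1 ≤ N ∧ a N ≤ K * N) := by
  set f : ℕ → ℝ := fun n => (n : ℝ) / (a n : ℝ) with hf
  have hcob : IsCoboundedUnder (· ≤ ·) atTop f :=
    isCoboundedUnder_le_of_le atTop (x := 0) (fun n => by positivity)
  set L := Filter.limsup f Filter.atTop with hL
  have hfreq : ∃ᶠ n in atTop, L / 2 < f n :=
    frequently_lt_of_lt_limsup hcob (half_lt_self hdens)
  have hE : (0:ℝ) < L / 2 := by positivity
  set K : ℕ := ⌈1 / (L/2)⌉₊ + 1 with hK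
  refine ⟨K, by omega, ?_⟩
  have := hfreq.and_eventually (eventually_ge_atTop 1)
  refine this.mono ?_
  rintro n ⟨hn, hn1⟩
  refine ⟨hn1, ?_⟩
  have ha0 : 0 < (a n : ℝ) := by exact_mod_cast hpos n hn1
  have h1 : (L/2) * (a n : ℝ) < n := by
    rw [hf] at hn
    calc (L/2) * (a n : ℝ) < ((n : ℝ) / (a n : ℝ)) * (a n : ℝ) :=
      mul_lt_mul_of_pos_right hn ha0
    _ = n := by field_simp
  have h2 : (a n : ℝ) < (n : ℝ) * (1 / (L/2)) := by
    rw [mul_one_div, lt_div_iff₀ hE]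
    nlinarith
  have h3 : (1 / (L/2) : ℝ) ≤ K := by
    rw [hK]
    push_cast
    have := Nat.le_ceil (1 / (L/2))
    linarith
  have h4 : (a n : ℝ) < (K : ℝ) * (n : ℝ) := by
    have hn0 : (0:ℝ) ≤ n := by positivity
    calc (a n : ℝ) < (n : ℝ) * (1 / (L/2)) := h2
    _ ≤ (n : ℝ) * K := mul_le_mul_of_nonneg_left h3 hn0
    _ = (K : ℝ) * n := by ring
  have h5 : (a n : ℝ) < ((K * n : ℕ) : ℝ) := by
    rw [Nat.cast_mul]; exact h4
  exact le_of_lt (by exact_mod_cast h5)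

set_option maxHeartbeats 1000000 in
/-- If `(a_n)_{n ≥ 1}` is a strictly increasing sequence of positive integers with
positive upper density, i.e. `limsup_{n → ∞} n / a_n > 0`, then for no real `α`
does `({a_n α})_{n ≥ 1}` have Poissonian pair correlations. -/
theorem positive_upper_density_not_poissonian
    (a : ℕ → ℕ)
    (hmono : ∀ m n, 1 ≤ m → m < n → a m < a n)
    (hpos : ∀ n, 1 ≤ n → 0 < a n)
    (hdens : 0 < Filter.limsup (fun n : ℕ => (n : ℝ) / (a n : ℝ)) Filter.atTop)
    (α : ℝ) :
    ¬ HasPoissonianPairCorrelations (fun n => Int.fract ((a n : ℝ) * α)) := by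
  classical
  intro hP
  obtain ⟨K, hK, hKfreq⟩ := get_K hpos hdens
  have hK1 : (1:ℝ) ≤ K := by exact_mod_cast hK
  have hK0 : (0:ℝ) < K := by linarith
  set sh : ℝ := 1 / (32 * (K:ℝ)) with hsh
  have hsh0 : 0 < sh := by positivity
  have hE1 : ∀ᶠ N in atTop, sh * N < ((PCset a α sh N).card : ℝ) := by
    have h1 : ∀ᶠ N in atTop, sh < pairCorrFn (fun n => Int.fract ((a n : ℝ) * α)) sh N :=
      (hP sh hsh0).eventually_const_lt (by linarith)
    filter_upwards [h1, eventually_ge_atTop 1] with N h hN1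
    have hN1' : (1:ℝ) ≤ N := by exact_mod_cast hN1
    have hN0 : (0:ℝ) < N := by linarith
    rw [pairCorrFn_eq] at h
    have h2 := mul_lt_mul_of_pos_right h hN0
    have h3 : 1 / (N:ℝ) * ((PCset a α sh N).card : ℝ) * N = ((PCset a α sh N).card : ℝ) := by
      field_simp
    rw [h3] at h2
    exact h2
  have hE2 : ∀ᶠ N in atTop, ((PCset a α (5/16 : ℝ) N).card : ℝ) < (3/2) * N := by
    have h1 : ∀ᶠ N in atTop,
        pairCorrFn (fun n => Int.fract ((a n : ℝ) * α)) (5/16) N < (3/2) :=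
      (hP (5/16) (by norm_num)).eventually_lt_const (by norm_num)
    filter_upwards [h1, eventually_ge_atTop 1] with N h hN1
    have hN1' : (1:ℝ) ≤ N := by exact_mod_cast hN1
    have hN0 : (0:ℝ) < N := by linarith
    rw [pairCorrFn_eq] at h
    have h2 := mul_lt_mul_of_pos_right h hN0
    have h3 : 1 / (N:ℝ) * ((PCset a α (5/16:ℝ) N).card : ℝ) * N
        = ((PCset a α (5/16:ℝ) N).card : ℝ) := by
      field_simp
    rw [h3] at h2
    exact h2
  have hsplit : ∃ᶠ N in atTop,
      (((1 ≤ N ∧ a N ≤ K * N) ∧ 10 * K + 2 ≤ (Dset a α sh N).card) ∨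
      ((1 ≤ N ∧ a N ≤ K * N) ∧ (Dset a α sh N).card ≤ 10 * K + 1)) := by
    refine hKfreq.mono (fun N h => ?_)
    rcases le_or_gt (10 * K + 2) ((Dset a α sh N).card) with hc | hc
    · exact Or.inl ⟨h, hc⟩
    · exact Or.inr ⟨h, by omega⟩
  rcases frequently_or_distrib.mp hsplit with hf1 | hf2
  · -- Branch 1: many difference values
    obtain ⟨N, ⟨⟨hN1, haN⟩, hDc⟩, hN20, hE2N⟩ :=
      (hf1.and_eventually ((eventually_ge_atTop 20).and hE2)).exists
    obtain ⟨q, hq1, hq2, hqn⟩ := exists_q hmono hpos hK hN1 haN hDc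
    have hclump := clump hmono hpos hK hN20 haN hq1 hq2 hqn
    linarith
  · -- Branch 2: few difference values
    set c : ℝ := 1 / (352 * (K:ℝ)^2) with hc
    have hc0 : 0 < c := by positivity
    have hfreq2 : ∃ᶠ N in atTop, ∃ d : ℤ, d ≠ 0 ∧ c * N ≤ ((Tset a d N).card : ℝ) ∧
        nearestIntDist ((d:ℝ) * α) ≤ sh / N ∧ 1 ≤ N := by
      refine (hf2.and_eventually hE1).mono ?_
      rintro N ⟨⟨⟨hN1, haN⟩, hDle⟩, hcard⟩
      obtain ⟨d, hd0, hdT, hdn⟩ := branch2_select hmono hpos hK hN1 haN hDle hcard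
      exact ⟨d, hd0, hdT, hdn, hN1⟩
    set ε' : ℝ := c / 2 with hε'
    have hε'0 : 0 < ε' := by positivity
    set M : ℕ := ⌈sh / ε'⌉₊ + 1 with hM
    have hfreq3 : ∃ᶠ N in atTop, ∃ k, k < M ∧ (∃ d : ℤ, d ≠ 0 ∧
        c * N ≤ ((Tset a d N).card : ℝ) ∧
        nearestIntDist ((d:ℝ) * α) ≤ sh / N ∧ 1 ≤ N ∧
        ⌊((N:ℝ) * nearestIntDist ((d:ℝ) * α)) / ε'⌋₊ = k) := by
      refine hfreq2.mono ?_
      rintro N ⟨d, hd0, hdT, hdn, hN1⟩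
      refine ⟨⌊((N:ℝ) * nearestIntDist ((d:ℝ) * α)) / ε'⌋₊, ?_, d, hd0, hdT, hdn, hN1, rfl⟩
      have hN1' : (1:ℝ) ≤ N := by exact_mod_cast hN1
      have hN0 : (0:ℝ) < N := by linarith
      have hu : (N:ℝ) * nearestIntDist ((d:ℝ) * α) ≤ sh := by
        calc (N:ℝ) * nearestIntDist ((d:ℝ) * α) ≤ (N:ℝ) * (sh / N) :=
          mul_le_mul_of_nonneg_left hdn (le_of_lt hN0)
        _ = sh := by field_simp
      have h1 : ⌊((N:ℝ) * nearestIntDist ((d:ℝ) * α)) / ε'⌋₊ ≤ ⌈sh / ε'⌉₊ := by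
        refine le_trans (Nat.floor_le_floor ?_) (Nat.floor_le_ceil _)
        gcongr
      omega
    obtain ⟨k, hkM, hfk⟩ := PPC_freq_pigeon hfreq3
    rcases Nat.eq_zero_or_pos k with hk0 | hk1
    · -- k = 0 : the heavy difference is very close to an integer multiple
      subst hk0
      have hEk : ∀ᶠ N in atTop,
          pairCorrFn (fun n => Int.fract ((a n : ℝ) * α)) ε' N < (3/2) * c :=
        (hP ε' hε'0).eventually_lt_const (by rw [hε']; linarith)
      obtain ⟨N, ⟨d, hd0, hdT, hdn, hN1, hfl⟩, hEkN⟩ := (hfk.and_eventually hEk).exists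
      have hN1' : (1:ℝ) ≤ N := by exact_mod_cast hN1
      have hN0 : (0:ℝ) < N := by linarith
      have hfl' : ((N:ℝ) * nearestIntDist ((d:ℝ) * α)) / ε' < 1 := Nat.floor_eq_zero.mp hfl
      have hu : (N:ℝ) * nearestIntDist ((d:ℝ) * α) < ε' := (div_lt_one hε'0).mp hfl'
      have hnid : nearestIntDist ((d:ℝ) * α) ≤ ε' / N := by
        rw [le_div_iff₀ hN0]
        have hcomm : nearestIntDist ((d:ℝ) * α) * N = (N:ℝ) * nearestIntDist ((d:ℝ) * α) :=
          mul_comm _ _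
        linarith
      have hlow := PCset_lower_two (a := a) (α := α) (N := N) hd0 hnid
      rw [pairCorrFn_eq] at hEkN
      have h2 := mul_lt_mul_of_pos_right hEkN hN0
      have h3 : 1 / (N:ℝ) * ((PCset a α ε' N).card : ℝ) * N = ((PCset a α ε' N).card : ℝ) := by
        field_simp
      rw [h3] at h2
      have hlow' : 2 * (c * N) ≤ ((PCset a α ε' N).card : ℝ) := by
        have hcast : (2 * (Tset a d N).card : ℕ) ≤ ((PCset a α ε' N).card : ℕ) := hlow
        have hcast' : 2 * ((Tset a d N).card : ℝ) ≤ ((PCset a α ε' N).card : ℝ) := by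
          exact_mod_cast hcast
        linarith
      linarith [mul_pos hc0 hN0]
    · -- k ≥ 1 : jump in the pair correlation function
      set s1 : ℝ := ((k:ℝ) + 1) * ε' with hs1
      set s2 : ℝ := ((k:ℝ) - 1/2) * ε' with hs2
      have hk1' : (1:ℝ) ≤ k := by exact_mod_cast hk1
      have hs10 : 0 < s1 := mul_pos (by linarith) hε'0
      have hs20 : 0 < s2 := mul_pos (by linarith) hε'0
      have hEa : ∀ᶠ N in atTop,
          pairCorrFn (fun n => Int.fract ((a n : ℝ) * α)) s1 N < 2 * s1 + c/8 :=
        (hP s1 hs10).eventually_lt_const (by linarith)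
      have hEb : ∀ᶠ N in atTop,
          2 * s2 - c/8 < pairCorrFn (fun n => Int.fract ((a n : ℝ) * α)) s2 N :=
        (hP s2 hs20).eventually_const_lt (by linarith)
      obtain ⟨N, ⟨d, hd0, hdT, hdn, hN1, hfl⟩, hEaN, hEbN⟩ :=
        (hfk.and_eventually (hEa.and hEb)).exists
      have hN1' : (1:ℝ) ≤ N := by exact_mod_cast hN1
      have hN0 : (0:ℝ) < N := by linarith
      have hu0 : 0 ≤ ((N:ℝ) * nearestIntDist ((d:ℝ) * α)) / ε' :=
        div_nonneg (mul_nonneg (le_of_lt hN0) (nid_nonneg _)) hε'0.le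
      have hfl2 := (Nat.floor_eq_iff hu0).mp hfl
      have hul : (k:ℝ) * ε' ≤ (N:ℝ) * nearestIntDist ((d:ℝ) * α) := by
        have := (le_div_iff₀ hε'0).mp hfl2.1
        linarith
      have huu : (N:ℝ) * nearestIntDist ((d:ℝ) * α) < s1 := by
        have := (div_lt_iff₀ hε'0).mp hfl2.2
        rw [hs1]
        push_cast at this ⊢
        linarith
      have hnid_le : nearestIntDist ((d:ℝ) * α) ≤ s1 / N := by
        rw [le_div_iff₀ hN0]
        have hcomm : nearestIntDist ((d:ℝ) * α) * N = (N:ℝ) * nearestIntDist ((d:ℝ) * α) :=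
          mul_comm _ _
        linarith
      have hnid_gt : s2 / N < nearestIntDist ((d:ℝ) * α) := by
        rw [div_lt_iff₀ hN0]
        have hs2lt : s2 < (k:ℝ) * ε' := by rw [hs2]; nlinarith
        have hcomm : nearestIntDist ((d:ℝ) * α) * N = (N:ℝ) * nearestIntDist ((d:ℝ) * α) :=
          mul_comm _ _
        linarith
      have hs21 : s2 ≤ s1 := by
        rw [hs1, hs2]
        nlinarith [hε'0.le]
      have hjump := PCset_lower_jump (a := a) (α := α) hd0 hnid_le hnid_gt hs21
      rw [pairCorrFn_eq] at hEaN hEbN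
      have h2a := mul_lt_mul_of_pos_right hEaN hN0
      have h3a : 1 / (N:ℝ) * ((PCset a α s1 N).card : ℝ) * N = ((PCset a α s1 N).card : ℝ) := by
        field_simp
      rw [h3a] at h2a
      have h2b := mul_lt_mul_of_pos_right hEbN hN0
      have h3b : 1 / (N:ℝ) * ((PCset a α s2 N).card : ℝ) * N = ((PCset a α s2 N).card : ℝ) := by
        field_simp
      rw [h3b] at h2b
      have hjump' : ((PCset a α s2 N).card : ℝ) + 2 * (c * N) ≤ ((PCset a α s1 N).card : ℝ) := by
        have hcast : (((PCset a α s2 N).card + 2 * (Tset a d N).card : ℕ) : ℝ)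
            ≤ ((PCset a α s1 N).card : ℝ) := by exact_mod_cast hjump
        push_cast at hcast
        linarith
      have hs12 : s1 - s2 = (3/2) * ε' := by rw [hs1, hs2]; ring
      have hfin : (2 * s1 + c/8) * N > (2 * s2 - c/8) * N + 2 * (c * N) := by linarith
      have hcoef : (2 * s1 + c/8) * N - ((2 * s2 - c/8) * N + 2 * (c * N)) = (-c/4) * N := by
        have h1 : s1 = s2 + (3/2) * ε' := by linarith
        rw [h1, hε']
        ring
      linarith [mul_pos hc0 hN0, hfin, hcoef]
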